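/- Let A and Ã be 2×4 real matrices, each of rank 2, and suppose there is a nonzero real constant c such that for all column indices i < j the minors satisfy A_{ij} = c * Ã_{ij}. Then there exists an invertible 2×2 real matrix S such that A = S * Ã. -/

import Mathlib

open Matrix

/-- The 2×2 minor of a 2×4 matrix formed by columns `i` and `j`. -/
def minor (M : Matrix (Fin 2) (Fin 4) ℝ) (i j : Fin 4) : ℝ :=
  M 0 i * M 1 j - M 0 j * M 1 i

lemma exists_minor_ne_zero (M : Matrix (Fin 2) (Fin 4) ℝ) (hr : M.rank = 2) :
    ∃ i j : Fin 4, minor M i j ≠ 0 := by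
  by_contra h
  push_neg at h
  have h01 := h 0 1; have h02 := h 0 2; have h03 := h 0 3
  have h12 := h 1 2; have h13 := h 1 3; have h23 := h 2 3
  simp only [minor] at h01 h02 h03 h12 h13 h23
  have hdet : (M * Mᵀ).det = 0 := by
    rw [Matrix.det_fin_two]
    simp only [Matrix.mul_apply, Matrix.transpose_apply, Fin.sum_univ_four]
    linear_combination (M 0 0 * M 1 1 - M 0 1 * M 1 0) * h01
      + (M 0 0 * M 1 2 - M 0 2 * M 1 0) * h02
      + (M 0 0 * M 1 3 - M 0 3 * M 1 0) * h03
      + (M 0 1 * M 1 2 - M 0 2 * M 1 1) * h12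
      + (M 0 1 * M 1 3 - M 0 3 * M 1 1) * h13
      + (M 0 2 * M 1 3 - M 0 3 * M 1 2) * h23
  have hrk : (M * Mᵀ).rank = 2 := by rw [Matrix.rank_self_mul_transpose, hr]
  obtain ⟨v, hv, hv0⟩ := (Matrix.exists_mulVec_eq_zero_iff).mpr hdet
  have hker : v ∈ LinearMap.ker (M * Mᵀ).mulVecLin := by
    simpa only [LinearMap.mem_ker, Matrix.mulVecLin_apply] using hv0
  have hrn := LinearMap.finrank_range_add_finrank_ker (M * Mᵀ).mulVecLin
  rw [show Module.finrank ℝ (Fin 2 → ℝ) = 2 by simp] at hrn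
  have hrr : (M * Mᵀ).rank = Module.finrank ℝ (LinearMap.range (M * Mᵀ).mulVecLin) := rfl
  rw [hrk] at hrr
  have hker0 : Module.finrank ℝ (LinearMap.ker (M * Mᵀ).mulVecLin) = 0 := by omega
  rw [Submodule.finrank_eq_zero] at hker0
  rw [hker0] at hker
  exact hv (by simpa using hker)

theorem row_equiv_of_proportional_minors
    (A Atilde : Matrix (Fin 2) (Fin 4) ℝ)
    (hrA : A.rank = 2) (hrAt : Atilde.rank = 2)
    (c : ℝ) (hc : c ≠ 0)
    (hminors : ∀ i j : Fin 4, i < j → minor A i j = c * minor Atilde i j) :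
    ∃ S : Matrix (Fin 2) (Fin 2) ℝ, IsUnit S ∧ A = S * Atilde := by
  have hm : ∀ i j : Fin 4, minor A i j = c * minor Atilde i j := by
    intro i j
    rcases lt_trichotomy i j with h | h | h
    · exact hminors i j h
    · subst h; unfold minor; ring
    · have := hminors j i h
      unfold minor at this ⊢
      linear_combination -this
  obtain ⟨i, j, hd⟩ := exists_minor_ne_zero Atilde hrAt
  unfold minor at hd
  have keyA : ∀ r : Fin 2, ∀ k, minor A i j * A r k
      = A r j * minor A i k - A r i * minor A j k := by
    intro r k
    fin_cases r <;>
      · simp only [Fin.zero_eta, Fin.mk_one]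
        unfold minor
        ring
  have key : ∀ r : Fin 2, ∀ k, (Atilde 0 i * Atilde 1 j - Atilde 0 j * Atilde 1 i) * A r k
      = A r j * minor Atilde i k - A r i * minor Atilde j k := by
    intro r k
    have h1 := keyA r k
    rw [hm i j, hm i k, hm j k] at h1
    apply mul_left_cancel₀ hc
    unfold minor
    unfold minor at h1
    linear_combination h1
  set S : Matrix (Fin 2) (Fin 2) ℝ := Matrix.of fun r s =>
    if s = 0 then (Atilde 0 i * Atilde 1 j - Atilde 0 j * Atilde 1 i)⁻¹
        * (A r i * Atilde 1 j - A r j * Atilde 1 i)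
    else (Atilde 0 i * Atilde 1 j - Atilde 0 j * Atilde 1 i)⁻¹
        * (A r j * Atilde 0 i - A r i * Atilde 0 j) with hS
  have hAS : A = S * Atilde := by
    ext r k
    rw [Matrix.mul_apply, Fin.sum_univ_two]
    have hk := key r k
    unfold minor at hk
    simp only [hS, Matrix.of_apply, if_pos rfl, if_neg (by decide : (1 : Fin 2) ≠ 0), ↓reduceIte]
    field_simp
    linear_combination hk
  refine ⟨S, ?_, hAS⟩
  rw [Matrix.isUnit_iff_isUnit_det]
  have hdetS : S.det = c := by
    have hQ := hm i j
    unfold minor at hQ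
    rw [Matrix.det_fin_two]
    simp only [hS, Matrix.of_apply, if_pos rfl, if_neg (by decide : (1 : Fin 2) ≠ 0), ↓reduceIte]
    field_simp
    linear_combination (Atilde 0 i * Atilde 1 j - Atilde 0 j * Atilde 1 i) * hQ
  rw [hdetS]
  exact hc.isUnit
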